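/- Let X be a real Banach space and T : X ⇉ X* maximal monotone with (0,0) ∈ gra T. Then F_T(0,0) = 0, and the function t ↦ F_T(tz, tz*) is real-valued and continuous on [0,1] whenever F_T(λz,λz*) < ∞ for all λ ∈ [0,1]; consequently, if F_T(λz,λz*) ≥ λ²⟨z,z*⟩ for all λ ∈ (0,1), then F_T(z,z*) ≥ ⟨z,z*⟩. -/

import Mathlib

open Set Filter Pointwise

noncomputable section

variable {X : Type*}

abbrev Dual' (X : Type*) [NormedAddCommGroup X] [NormedSpace ℝ X] := X →L[ℝ] ℝ

section Defs
variable [NormedAddCommGroup X] [NormedSpace ℝ X]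

/-- `A` is a monotone operator. -/
def MonotoneOp (A : X → Set (Dual' X)) : Prop :=
  ∀ x y (x' y' : Dual' X), x' ∈ A x → y' ∈ A y → 0 ≤ (x' - y') (x - y)

/-- `A` is maximal monotone: monotone, and every monotonically related pair is in the graph. -/
def MaxMonotone (A : X → Set (Dual' X)) : Prop :=
  MonotoneOp A ∧
    ∀ x (x' : Dual' X), (∀ y y', y' ∈ A y → 0 ≤ (x' - y') (x - y)) → x' ∈ A x

/-- domain of a set-valued operator -/
def domOp (A : X → Set (Dual' X)) : Set X := {x | (A x).Nonempty}

/-- pointwise Minkowski sum of two set-valued operators -/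
def opSum (A B : X → Set (Dual' X)) : X → Set (Dual' X) := fun x => A x + B x

/-- normal cone operator of a set `C` -/
def normalCone (C : Set X) : X → Set (Dual' X) :=
  fun x => {x' | x ∈ C ∧ ∀ c ∈ C, x' (c - x) ≤ 0}

/-- the Fitzpatrick function of `A` -/
def fitz (A : X → Set (Dual' X)) : X × Dual' X → EReal :=
  fun p => ⨆ q ∈ {q : X × Dual' X | q.2 ∈ A q.1},
    ((q.2 p.1 + p.2 q.1 - q.2 q.1 : ℝ) : EReal)

/-- `A` is maximal monotone of type (FPV) -/
def FPV (A : X → Set (Dual' X)) : Prop :=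
  MaxMonotone A ∧
    ∀ U : Set X, IsOpen U → Convex ℝ U → (U ∩ domOp A).Nonempty →
      ∀ x (x' : Dual' X), x ∈ U →
        (∀ y y', y' ∈ A y → y ∈ U → 0 ≤ (x' - y') (x - y)) → x' ∈ A x

/-- `A` is a linear relation: its graph is a linear subspace of `X × X*` -/
def LinearRel (A : X → Set (Dual' X)) : Prop :=
  (0 : Dual' X) ∈ A 0 ∧
  (∀ x y (x' y' : Dual' X), x' ∈ A x → y' ∈ A y → x' + y' ∈ A (x + y)) ∧
  (∀ (c : ℝ) x (x' : Dual' X), x' ∈ A x → c • x' ∈ A (c • x))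

/-- subdifferential of an extended-real-valued function -/
def subdiff (f : X → EReal) : X → Set (Dual' X) :=
  fun x => {x' | ∀ y, ((x' (y - x) : ℝ) : EReal) + f x ≤ f y}

/-- `f` is proper: never `⊥` and not identically `⊤` -/
def ProperFun (f : X → EReal) : Prop := (∀ x, f x ≠ ⊥) ∧ ∃ x, f x ≠ ⊤

/-- convexity for extended-real-valued functions -/
def EConvexOn (f : X → EReal) : Prop :=
  ∀ x y (t : ℝ), 0 ≤ t → t ≤ 1 →
    f (t • x + (1 - t) • y) ≤ (t : EReal) * f x + ((1 - t : ℝ) : EReal) * f y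

/-- effective domain of an extended-real-valued function -/
def domFun (f : X → EReal) : Set X := {x | f x ≠ ⊤}

end Defs

variable [NormedAddCommGroup X] [NormedSpace ℝ X] [CompleteSpace X]

open scoped Topology

private lemma auxCont {f : ℝ → ℝ} (hcvx : ConvexOn ℝ (Set.Icc (0:ℝ) 1) f)
    (hlsc : ∀ t ∈ Set.Icc (0:ℝ) 1, ∀ a : ℝ, a < f t →
      ∀ᶠ s in 𝓝[Set.Icc (0:ℝ) 1] t, a < f s) :
    ContinuousOn f (Set.Icc (0:ℝ) 1) := by
  have chord : ∀ t ∈ Set.Icc (0:ℝ) 1, f t ≤ (1 - t) * f 0 + t * f 1 := by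
    intro t ht
    have := hcvx.2 (Set.left_mem_Icc.2 zero_le_one) (Set.right_mem_Icc.2 zero_le_one)
      (by linarith [ht.2] : (0:ℝ) ≤ 1 - t) ht.1 (by ring)
    simpa [smul_eq_mul] using this
  have hend : ∀ c ∈ Set.Icc (0:ℝ) 1, (1 - c) * f 0 + c * f 1 = f c →
      ContinuousWithinAt f (Set.Icc (0:ℝ) 1) c := by
    intro c hc hcval
    refine tendsto_order.2 ⟨fun a ha => hlsc c hc a ha, fun b hb => ?_⟩
    have hA : ContinuousAt (fun s : ℝ => (1 - s) * f 0 + s * f 1) c := by fun_prop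
    have h1 : ∀ᶠ s in 𝓝 c, (1 - s) * f 0 + s * f 1 < b :=
      hA.eventually_lt_const (show (1 - c) * f 0 + c * f 1 < b by rw [hcval]; exact hb)
    have h2 : ∀ᶠ s in 𝓝[Set.Icc (0:ℝ) 1] c, (1 - s) * f 0 + s * f 1 < b :=
      h1.filter_mono nhdsWithin_le_nhds
    filter_upwards [h2, self_mem_nhdsWithin] with s hs hsmem
    exact lt_of_le_of_lt (chord s hsmem) hs
  intro t ht
  rcases eq_or_lt_of_le ht.1 with h0 | h0
  · obtain rfl := h0.symm
    exact hend 0 ht (by norm_num)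
  rcases eq_or_lt_of_le ht.2 with h1 | h1
  · obtain rfl := h1
    exact hend 1 ht (by norm_num)
  · have hco : ContinuousOn f (Set.Ioo (0:ℝ) 1) := by
      have := hcvx.continuousOn_interior
      rwa [interior_Icc] at this
    exact ((hco t ⟨h0, h1⟩).continuousAt (Ioo_mem_nhds h0 h1)).continuousWithinAt

theorem stmt17 (T : X → Set (Dual' X)) (hT : MaxMonotone T)
    (h0 : (0 : Dual' X) ∈ T 0) (z : X) (z' : Dual' X) :
    fitz T (0, 0) = 0 ∧
    ((∀ l : ℝ, l ∈ Set.Icc (0:ℝ) 1 → fitz T (l • z, l • z') < ⊤) →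
      ContinuousOn (fun t : ℝ => (fitz T (t • z, t • z')).toReal) (Set.Icc (0:ℝ) 1) ∧
      ((∀ l : ℝ, l ∈ Set.Ioo (0:ℝ) 1 →
          ((l ^ 2 * z' z : ℝ) : EReal) ≤ fitz T (l • z, l • z')) →
        ((z' z : ℝ) : EReal) ≤ fitz T (z, z'))) := by
  classical
  set S : Set (X × Dual' X) := {q : X × Dual' X | q.2 ∈ T q.1} with hSdef
  have h00 : ((0:X), (0:Dual' X)) ∈ S := h0
  have fitz_nonneg : ∀ p : X × Dual' X, (0 : EReal) ≤ fitz T p := by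
    intro p
    have := le_iSup₂ (f := fun (q : X × Dual' X) (_ : q ∈ S) =>
      ((q.2 p.1 + p.2 q.1 - q.2 q.1 : ℝ) : EReal)) ((0:X), (0:Dual' X)) h00
    simp at this
    exact this
  have fz : fitz T ((0:X), (0:Dual' X)) = 0 := by
    refine le_antisymm ?_ (fitz_nonneg _)
    refine iSup₂_le fun q hq => ?_
    have hmono : 0 ≤ (q.2 - 0) (q.1 - 0) := hT.1 q.1 0 q.2 0 hq h0
    simp only [sub_zero, ContinuousLinearMap.sub_apply, ContinuousLinearMap.zero_apply] at hmono
    have key : (q.2 (0:X) + (0:Dual' X) q.1 - q.2 q.1 : ℝ) ≤ 0 := by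
      simp only [map_zero, ContinuousLinearMap.zero_apply]
      linarith
    exact_mod_cast key
  refine ⟨fz, ?_⟩
  intro hfin
  set g : ℝ → EReal := fun t => fitz T (t • z, t • z') with hgdef
  set hh : ℝ → ℝ := fun t => (g t).toReal with hhdef
  have hgt : ∀ t : ℝ, g t = ⨆ q ∈ S, ((t * (q.2 z + z' q.1) - q.2 q.1 : ℝ) : EReal) := by
    intro t
    refine iSup_congr fun q => iSup_congr fun hq => ?_
    norm_cast
    simp only [map_smul, ContinuousLinearMap.smul_apply, smul_eq_mul]
    ring
  have hg_ne_bot : ∀ t : ℝ, g t ≠ ⊥ := by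
    intro t hb
    have := fitz_nonneg (t • z, t • z')
    rw [hgdef] at hb
    simp only at hb
    rw [hb] at this
    exact absurd this (by simp)
  have hcoe : ∀ t ∈ Set.Icc (0:ℝ) 1, ((hh t : ℝ) : EReal) = g t := fun t ht =>
    EReal.coe_toReal (hfin t ht).ne (hg_ne_bot t)
  have hub : ∀ (t r : ℝ), (∀ q ∈ S, t * (q.2 z + z' q.1) - q.2 q.1 ≤ r) →
      g t ≤ (r : EReal) := by
    intro t r H
    rw [hgt]
    exact iSup₂_le fun q hq => EReal.coe_le_coe_iff.2 (H q hq)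
  have hlb : ∀ q ∈ S, ∀ t : ℝ,
      ((t * (q.2 z + z' q.1) - q.2 q.1 : ℝ) : EReal) ≤ g t := by
    intro q hq t
    rw [hgt]
    exact le_iSup₂ (f := fun (q : X × Dual' X) (_ : q ∈ S) =>
      ((t * (q.2 z + z' q.1) - q.2 q.1 : ℝ) : EReal)) q hq
  have hbd : ∀ q ∈ S, ∀ t ∈ Set.Icc (0:ℝ) 1,
      t * (q.2 z + z' q.1) - q.2 q.1 ≤ hh t := by
    intro q hq t ht
    exact EReal.coe_le_coe_iff.1 ((hlb q hq t).trans_eq (hcoe t ht).symm)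
  have hcvx : ConvexOn ℝ (Set.Icc (0:ℝ) 1) hh := by
    refine ⟨convex_Icc _ _, ?_⟩
    intro x hx y hy a b ha hb hab
    have hmem : a • x + b • y ∈ Set.Icc (0:ℝ) 1 := (convex_Icc 0 1) hx hy ha hb hab
    have hmid : g (a • x + b • y) ≤ ((a * hh x + b * hh y : ℝ) : EReal) := by
      refine hub _ _ fun q hq => ?_
      have h1 := hbd q hq x hx
      have h2 := hbd q hq y hy
      have heq : (a • x + b • y) * (q.2 z + z' q.1) - q.2 q.1 =
          a * (x * (q.2 z + z' q.1) - q.2 q.1) + b * (y * (q.2 z + z' q.1) - q.2 q.1) := by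
        simp only [smul_eq_mul]
        linear_combination (q.2 q.1) * hab
      rw [heq]
      have := add_le_add (mul_le_mul_of_nonneg_left h1 ha) (mul_le_mul_of_nonneg_left h2 hb)
      linarith
    have := EReal.toReal_le_toReal hmid (hg_ne_bot _) (EReal.coe_ne_top _)
    rw [EReal.toReal_coe] at this
    simpa [hhdef, smul_eq_mul] using this
  have hlsc : LowerSemicontinuous g := by
    have hrw : g = fun t => ⨆ q ∈ S, ((t * (q.2 z + z' q.1) - q.2 q.1 : ℝ) : EReal) :=
      funext hgt
    rw [hrw]
    refine lowerSemicontinuous_iSup fun q => lowerSemicontinuous_iSup fun hq => ?_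
    exact (continuous_coe_real_ereal.comp (by fun_prop)).lowerSemicontinuous
  have hlscw : ∀ t ∈ Set.Icc (0:ℝ) 1, ∀ a : ℝ, a < hh t →
      ∀ᶠ s in 𝓝[Set.Icc (0:ℝ) 1] t, a < hh s := by
    intro t ht a ha
    have h1 : ((a : ℝ) : EReal) < g t := by
      rw [← hcoe t ht]
      exact_mod_cast ha
    have h2 : ∀ᶠ s in 𝓝 t, ((a : ℝ) : EReal) < g s := hlsc t _ h1
    have h3 : ∀ᶠ s in 𝓝[Set.Icc (0:ℝ) 1] t, ((a : ℝ) : EReal) < g s :=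
      h2.filter_mono nhdsWithin_le_nhds
    filter_upwards [h3, self_mem_nhdsWithin] with s hs hsmem
    rw [← hcoe s hsmem] at hs
    exact_mod_cast hs
  have hcont : ContinuousOn hh (Set.Icc (0:ℝ) 1) := auxCont hcvx hlscw
  refine ⟨hcont, ?_⟩
  intro hquad
  have hg1 : fitz T (z, z') = g 1 := by rw [hgdef]; simp
  rw [hg1, ← hcoe 1 (Set.right_mem_Icc.2 zero_le_one)]
  refine EReal.coe_le_coe_iff.2 ?_
  haveI : (𝓝[Set.Ioo (0:ℝ) 1] (1:ℝ)).NeBot := right_nhdsWithin_Ioo_neBot one_pos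
  have htend : Filter.Tendsto hh (𝓝[Set.Ioo (0:ℝ) 1] 1) (𝓝 (hh 1)) :=
    (hcont 1 (Set.right_mem_Icc.2 zero_le_one)).mono_left
      (nhdsWithin_mono _ Set.Ioo_subset_Icc_self)
  have htend2 : Filter.Tendsto (fun l : ℝ => l ^ 2 * z' z) (𝓝[Set.Ioo (0:ℝ) 1] 1)
      (𝓝 (z' z)) := by
    have : Filter.Tendsto (fun l : ℝ => l ^ 2 * z' z) (𝓝 1) (𝓝 ((1:ℝ) ^ 2 * z' z)) :=
      ((continuous_pow 2).mul continuous_const).tendsto 1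
    simpa using this.mono_left nhdsWithin_le_nhds
  refine le_of_tendsto_of_tendsto htend2 htend ?_
  filter_upwards [self_mem_nhdsWithin] with l hl
  have h2 : ((l ^ 2 * z' z : ℝ) : EReal) ≤ g l := hquad l hl
  rw [← hcoe l (Set.Ioo_subset_Icc_self hl)] at h2
  exact_mod_cast h2
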